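/- Let m ≤ n and let a, b be real n×m matrices of full rank m. Then a^T a = b^T b if and only if there exists an orthogonal matrix z ∈ O(n) such that a = z b. -/

import Mathlib

open Matrix


lemma inner_eq_dot {n : ℕ} (u v : EuclideanSpace ℝ (Fin n)) :
    (inner ℝ u v : ℝ) = (fun i => u i) ⬝ᵥ (fun i => v i) := by
  simp [PiLp.inner_apply, dotProduct, mul_comm]

lemma dot_mulVec_self {n m : ℕ} (a : Matrix (Fin n) (Fin m) ℝ) (x y : Fin m → ℝ) :
    (a *ᵥ x) ⬝ᵥ (a *ᵥ y) = x ⬝ᵥ ((aᵀ * a) *ᵥ y) := by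
  rw [← mulVec_mulVec, dotProduct_mulVec x, vecMul_transpose]

lemma mulVecLin_inj {n m : ℕ} (b : Matrix (Fin n) (Fin m) ℝ) (hb : b.rank = m) :
    Function.Injective b.mulVecLin := by
  rw [← LinearMap.ker_eq_bot]
  have h1 := LinearMap.finrank_range_add_finrank_ker b.mulVecLin
  rw [Module.finrank_fin_fun] at h1
  rw [Matrix.rank] at hb
  exact Submodule.finrank_eq_zero.mp (by omega)

/-- For full-rank real `n × m` matrices `a, b` (with `m ≤ n`),
`aᵀ a = bᵀ b` iff `a = z b` for some orthogonal `z ∈ O(n)`. -/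
theorem stmt_0 {n m : ℕ} (hmn : m ≤ n) (a b : Matrix (Fin n) (Fin m) ℝ)
    (ha : a.rank = m) (hb : b.rank = m) :
    aᵀ * a = bᵀ * b ↔ ∃ z ∈ Matrix.orthogonalGroup (Fin n) ℝ, a = z * b := by
  constructor
  · intro hab
    -- work in EuclideanSpace
    set V := EuclideanSpace ℝ (Fin n)
    set W := EuclideanSpace ℝ (Fin m)
    let fa : W →ₗ[ℝ] V := Matrix.toEuclideanLin a
    let fb : W →ₗ[ℝ] V := Matrix.toEuclideanLin b
    have hfa : ∀ x, fa x = fun i => (a *ᵥ x) i := fun _ => rfl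
    have hinner : ∀ x y : W, (inner ℝ (fa x) (fa y) : ℝ) = inner ℝ (fb x) (fb y) := by
      intro x y
      rw [inner_eq_dot, inner_eq_dot]
      show (a *ᵥ x) ⬝ᵥ (a *ᵥ y) = (b *ᵥ x) ⬝ᵥ (b *ᵥ y)
      rw [dot_mulVec_self, dot_mulVec_self, hab]
    have hbinj : Function.Injective fb := by
      intro x y h
      exact congrArg (WithLp.toLp 2) (mulVecLin_inj b hb (congrArg WithLp.ofLp h))
    let eqv : W ≃ₗ[ℝ] LinearMap.range fb := LinearEquiv.ofInjective fb hbinj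
    let L0 : (LinearMap.range fb : Submodule ℝ V) →ₗ[ℝ] V :=
      fa ∘ₗ (eqv.symm : (LinearMap.range fb : Submodule ℝ V) →ₗ[ℝ] W)
    have hL0 : ∀ u : LinearMap.range fb, (u : V) = fb (eqv.symm u) := by
      intro u
      conv_lhs => rw [← eqv.apply_symm_apply u]
      rfl
    have hinner0 : ∀ u v : LinearMap.range fb, (inner ℝ (L0 u) (L0 v) : ℝ) = inner ℝ u v := by
      intro u v
      have : (inner ℝ u v : ℝ) = inner ℝ (u : V) (v : V) := rfl
      rw [this, hL0 u, hL0 v]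
      exact (hinner _ _).symm ▸ hinner (eqv.symm u) (eqv.symm v)
    let L : (LinearMap.range fb : Submodule ℝ V) →ₗᵢ[ℝ] V := L0.isometryOfInner hinner0
    let F : V →ₗᵢ[ℝ] V := L.extend
    have hkey : ∀ x : W, F (fb x) = fa x := by
      intro x
      have hmem : fb x ∈ LinearMap.range fb := LinearMap.mem_range_self _ x
      have h1 : F (fb x) = L ⟨fb x, hmem⟩ := L.extend_apply ⟨fb x, hmem⟩
      rw [h1]
      show L0 ⟨fb x, hmem⟩ = fa x
      have h2 : eqv.symm ⟨fb x, hmem⟩ = x := by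
        apply eqv.injective
        rw [eqv.apply_symm_apply]
        rfl
      show fa (eqv.symm ⟨fb x, hmem⟩) = fa x
      rw [h2]
    -- extract the matrix
    let z : Matrix (Fin n) (Fin n) ℝ := Matrix.toEuclideanLin.symm F.toLinearMap
    have hz : ∀ v : Fin n → ℝ, z *ᵥ v = (F (WithLp.toLp 2 v)).ofLp := by
      intro v
      have := Matrix.toEuclideanLin.apply_symm_apply F.toLinearMap
      calc z *ᵥ v = (Matrix.toEuclideanLin z (WithLp.toLp 2 v)).ofLp := rfl
        _ = (F (WithLp.toLp 2 v)).ofLp := by rw [this]; rfl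
    have hFinner : ∀ u v : V, (inner ℝ (F u) (F v) : ℝ) = inner ℝ u v := fun u v =>
      F.inner_map_map u v
    refine ⟨z, ?_, ?_⟩
    · rw [Matrix.mem_orthogonalGroup_iff']
      have hstar : star z = zᵀ := by
        ext i j; simp [Matrix.star_eq_conjTranspose]
      ext i j
      have h1 : (zᵀ * z) i j = (z *ᵥ Pi.single i 1) ⬝ᵥ (z *ᵥ Pi.single j 1) := by
        simp [Matrix.mul_apply, Matrix.mulVec_single, dotProduct]
      have h2 := hFinner (WithLp.toLp 2 (Pi.single i 1 : Fin n → ℝ)) (WithLp.toLp 2 (Pi.single j 1 : Fin n → ℝ))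
      rw [inner_eq_dot, inner_eq_dot] at h2
      rw [h1, hz, hz]
      rw [h2]
      show (Pi.single i 1 : Fin n → ℝ) ⬝ᵥ (Pi.single j 1 : Fin n → ℝ) = (1 : Matrix (Fin n) (Fin n) ℝ) i j
      simp [dotProduct, Pi.single_apply, Matrix.one_apply, eq_comm]
    · have hcol : ∀ v : Fin m → ℝ, a *ᵥ v = (z * b) *ᵥ v := by
        intro v
        rw [← mulVec_mulVec, hz (b *ᵥ v)]
        exact (congrArg WithLp.ofLp (hkey (WithLp.toLp 2 v))).symm
      ext i j
      have := congrFun (hcol (Pi.single j 1)) i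
      simpa [Matrix.mulVec_single] using this
  · rintro ⟨z, hz, rfl⟩
    have h1 : zᵀ * z = 1 := by
      rw [Matrix.mem_orthogonalGroup_iff'] at hz
      exact hz
    rw [Matrix.transpose_mul, Matrix.mul_assoc, ← Matrix.mul_assoc zᵀ z b, h1, Matrix.one_mul]
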